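/- Every binary 1-balanced infinite word w has the property that any two 2-binomially equivalent factors of w are equal; equivalently, the 2-binomial complexity of w coincides with its subword complexity. -/

import Mathlib

/-- Number of occurrences of `x` as a scattered subword of `w`. -/
def binom {α : Type*} [DecidableEq α] (w x : List α) : ℕ := w.sublists.count x

/-- `k`-binomial equivalence of finite words. -/
def KBinEquiv {α : Type*} [DecidableEq α] (k : ℕ) (u v : List α) : Prop :=
  ∀ x : List α, x.length ≤ k → binom u x = binom v x

/-- `u` is a factor (finite contiguous subword) of the infinite word `w`. -/
def Factor {α : Type*} (w : ℕ → α) (u : List α) : Prop :=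
  ∃ s : ℕ, u = (List.range u.length).map (fun t => w (s + t))

open List

lemma listBEq_eq {α : Type*} [DecidableEq α] :
    (instBEq : BEq (List α)) = instBEqOfDecidableEq := by
  refine congrArg BEq.mk ?_
  funext a b
  show (a == b) = decide (a = b)
  by_cases h : a = b <;> simp [h]

lemma binom_eq' {α : Type*} [DecidableEq α] (w x : List α) :
    binom w x = w.sublists'.count x := by
  have h := (sublists_perm_sublists' w).count_eq x
  unfold binom
  exact h

lemma binom_nil {α : Type*} [DecidableEq α] (w : List α) : binom w [] = 1 := by
  induction w with
  | nil => rfl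
  | cons c t ih =>
    rw [binom_eq'] at ih ⊢
    rw [sublists'_cons, count_append, ih, count_eq_zero.mpr (by simp)]

lemma binom_nil_left {α : Type*} [DecidableEq α] (a : α) (x : List α) :
    binom [] (a :: x) = 0 := by
  rw [binom_eq']
  show count (a :: x) [[]] = 0
  simp [count_singleton']

lemma binom_cons {α : Type*} [DecidableEq α] (c : α) (t : List α) (a : α) (x : List α) :
    binom (c :: t) (a :: x) = binom t (a :: x) + if a = c then binom t x else 0 := by
  rw [binom_eq', binom_eq', binom_eq', sublists'_cons, count_append]
  congr 1
  by_cases h : a = c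
  · subst h
    rw [if_pos rfl]
    exact count_map_of_injective _ _ (List.cons_injective) x
  · rw [if_neg h, count_eq_zero]
    simp only [mem_map]
    rintro ⟨z, -, hz⟩
    injection hz with h1 h2
    exact h h1.symm

lemma binom_single {α : Type*} [DecidableEq α] (w : List α) (a : α) :
    binom w [a] = w.count a := by
  induction w with
  | nil => rfl
  | cons c t ih =>
    rw [binom_cons, ih, count_cons, binom_nil]
    by_cases h : a = c
    · simp [h]
    · simp [h, Ne.symm h]

lemma fin2 : ∀ c : Fin 2, c = 0 ∨ c = 1 := by decide

lemma count01 (u : List (Fin 2)) : u.count 0 + u.count 1 = u.length := by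
  induction u with
  | nil => rfl
  | cons c t ih =>
    rw [count_cons, count_cons, length_cons]
    rcases fin2 c with rfl | rfl <;> simp <;> omega

lemma key (u : List (Fin 2)) :
    (∑ m ∈ Finset.range u.length, (u.take m).count 1)
      + binom u [0,1] + binom u [1,1] + u.count 1
    = u.length * u.count 1 := by
  induction u with
  | nil => simp [binom_nil_left]
  | cons c t ih =>
    rcases fin2 c with rfl | rfl
    · rw [length_cons, Finset.sum_range_succ']
      rw [binom_cons, binom_cons, binom_single, count_cons]
      simp only [take_succ_cons, count_cons, take_zero, count_nil,
        show ((0 : Fin 2) == 1) = false by decide, if_false, Bool.false_eq_true,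
        show ((0 : Fin 2) = 0) ↔ True by simp, show ((1 : Fin 2) = 0) ↔ False by decide,
        if_true, add_zero]
      rw [add_mul, one_mul]
      linarith [ih]
    · rw [length_cons, Finset.sum_range_succ']
      rw [binom_cons, binom_cons, binom_single, count_cons]
      simp only [take_succ_cons, count_cons, take_zero, count_nil,
        show ((1 : Fin 2) == 1) = true by decide, Bool.false_eq_true,
        show ((0 : Fin 2) = 1) ↔ False by decide, show ((1 : Fin 2) = 1) ↔ True by simp,
        if_true, if_false, add_zero]
      rw [Finset.sum_add_distrib, Finset.sum_const, Finset.card_range, smul_eq_mul, mul_one]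
      rw [add_mul, one_mul, mul_add, mul_one]
      linarith [ih]

lemma factor_take {α : Type*} {w : ℕ → α} {u : List α} (h : Factor w u) (m : ℕ) :
    Factor w (u.take m) := by
  obtain ⟨s, hs⟩ := h
  refine ⟨s, ?_⟩
  conv_lhs => rw [hs, ← map_take, take_range]
  rw [length_take]

lemma factor_drop {α : Type*} {w : ℕ → α} {u : List α} (h : Factor w u) (a : ℕ) :
    Factor w (u.drop a) := by
  obtain ⟨s, hs⟩ := h
  by_cases ha : a ≤ u.length
  · refine ⟨s + a, ?_⟩
    have hr : (List.range u.length).drop a = (List.range (u.length - a)).map (a + ·) := by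
      conv_lhs => rw [show u.length = a + (u.length - a) by omega, List.range_add]
      exact List.drop_left' length_range
    conv_lhs => rw [hs, ← map_drop, hr]
    rw [map_map, length_drop]
    refine List.map_congr_left fun x _ => ?_
    simp [Function.comp, add_assoc]
  · rw [drop_eq_nil_of_le (by omega)]
    exact ⟨0, rfl⟩

lemma eq_of_prefix_counts : ∀ (u v : List (Fin 2)), u.length = v.length →
    (∀ m, (u.take m).count 1 = (v.take m).count 1) → u = v := by
  intro u
  induction u with
  | nil =>
    intro v hl _
    exact (List.eq_nil_of_length_eq_zero hl.symm).symm
  | cons c t ih =>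
    intro v hl h0
    cases v with
    | nil => simp at hl
    | cons d s =>
      have hcd : c = d := by
        have h1 := h0 1
        simp only [take_succ_cons, take_zero, count_cons, count_nil] at h1
        revert h1
        rcases fin2 c with rfl | rfl <;> rcases fin2 d with rfl | rfl <;> simp
      subst hcd
      have hts : t = s := by
        apply ih s (by simpa using hl)
        intro m
        have h1 := h0 (m + 1)
        simp only [take_succ_cons, count_cons] at h1
        omega
      rw [hts]

theorem stmt_13 (w : ℕ → Fin 2)
    (hbal : ∀ u v : List (Fin 2), Factor w u → Factor w v → u.length = v.length →
      ∀ a : Fin 2, |(u.count a : ℤ) - (v.count a : ℤ)| ≤ 1) :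
    ∀ u v : List (Fin 2), Factor w u → Factor w v → KBinEquiv 2 u v → u = v := by
  intro u v hu hv h
  have h0 : u.count 0 = v.count 0 := by
    have := h [0] (by simp)
    rwa [binom_single, binom_single] at this
  have h1 : u.count 1 = v.count 1 := by
    have := h [1] (by simp)
    rwa [binom_single, binom_single] at this
  have hlen : u.length = v.length := by
    rw [← count01 u, ← count01 v, h0, h1]
  have h01 : binom u [0,1] = binom v [0,1] := h [0,1] (by simp)
  have h11 : binom u [1,1] = binom v [1,1] := h [1,1] (by simp)
  have hsum : ∑ m ∈ Finset.range u.length,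
      (((u.take m).count 1 : ℤ) - ((v.take m).count 1 : ℤ)) = 0 := by
    have ku := key u
    have kv := key v
    rw [← hlen, ← h1, ← h01, ← h11] at kv
    have hTT : (∑ m ∈ Finset.range u.length, (u.take m).count 1)
        = ∑ m ∈ Finset.range u.length, (v.take m).count 1 := by
      have := ku.trans kv.symm
      omega
    rw [Finset.sum_sub_distrib, ← Nat.cast_sum, ← Nat.cast_sum, hTT, sub_self]
  have habs : ∀ m, |((u.take m).count 1 : ℤ) - ((v.take m).count 1 : ℤ)| ≤ 1 := by
    intro m
    exact hbal _ _ (factor_take hu m) (factor_take hv m)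
      (by rw [length_take, length_take, hlen]) 1
  -- the key contradiction: the difference function cannot take both values 1 and -1
  have hcontra : ∀ a b : ℕ, a < b →
      (((u.take a).count 1 : ℤ) - ((v.take a).count 1 : ℤ) = 1 ∧
        ((u.take b).count 1 : ℤ) - ((v.take b).count 1 : ℤ) = -1) ∨
      (((u.take a).count 1 : ℤ) - ((v.take a).count 1 : ℤ) = -1 ∧
        ((u.take b).count 1 : ℤ) - ((v.take b).count 1 : ℤ) = 1) → False := by
    intro a b hab hor
    have hcu : ((u.take b).drop a).count 1 + (u.take a).count 1 = (u.take b).count 1 := by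
      conv_rhs => rw [← take_append_drop a (u.take b)]
      rw [count_append, take_take, min_eq_left (by omega : a ≤ b)]
      omega
    have hcv : ((v.take b).drop a).count 1 + (v.take a).count 1 = (v.take b).count 1 := by
      conv_rhs => rw [← take_append_drop a (v.take b)]
      rw [count_append, take_take, min_eq_left (by omega : a ≤ b)]
      omega
    have hflen : ((u.take b).drop a).length = ((v.take b).drop a).length := by
      rw [length_drop, length_drop, length_take, length_take, hlen]
    have hb := hbal _ _ (factor_drop (factor_take hu b) a)
      (factor_drop (factor_take hv b) a) hflen 1
    rw [abs_le] at hb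
    obtain ⟨hb1, hb2⟩ := hb
    rcases hor with ⟨e1, e2⟩ | ⟨e1, e2⟩ <;> omega
  by_contra hne
  have hex : ∃ m, ((u.take m).count 1 : ℤ) - ((v.take m).count 1 : ℤ) ≠ 0 := by
    by_contra h'
    push_neg at h'
    exact hne (eq_of_prefix_counts u v hlen (fun m => by have := h' m; omega))
  obtain ⟨m0, hm0⟩ := hex
  have hm0lt : m0 < u.length := by
    by_contra h'
    push_neg at h'
    rw [take_of_length_le h', take_of_length_le (hlen ▸ h')] at hm0
    omega
  rcases lt_or_gt_of_ne hm0 with hneg | hpos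
  · -- difference at m0 is -1; find q where it is positive
    have hm0v : ((u.take m0).count 1 : ℤ) - ((v.take m0).count 1 : ℤ) = -1 := by
      have := habs m0; rw [abs_le] at this; omega
    have hq : ∃ q ∈ Finset.range u.length,
        0 < ((u.take q).count 1 : ℤ) - ((v.take q).count 1 : ℤ) := by
      by_contra h'
      push_neg at h'
      have hlt : ∑ m ∈ Finset.range u.length,
          (((u.take m).count 1 : ℤ) - ((v.take m).count 1 : ℤ)) < 0 :=
        Finset.sum_neg' (fun i hi => h' i hi)
          ⟨m0, Finset.mem_range.mpr hm0lt, by omega⟩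
      rw [hsum] at hlt
      exact lt_irrefl _ hlt
    obtain ⟨q, _, hqpos⟩ := hq
    have hqv : ((u.take q).count 1 : ℤ) - ((v.take q).count 1 : ℤ) = 1 := by
      have := habs q; rw [abs_le] at this; omega
    rcases lt_trichotomy q m0 with hlt | heq | hgt
    · exact hcontra q m0 hlt (Or.inl ⟨hqv, hm0v⟩)
    · subst heq; omega
    · exact hcontra m0 q hgt (Or.inr ⟨hm0v, hqv⟩)
  · have hm0v : ((u.take m0).count 1 : ℤ) - ((v.take m0).count 1 : ℤ) = 1 := by
      have := habs m0; rw [abs_le] at this; omega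
    have hq : ∃ q ∈ Finset.range u.length,
        ((u.take q).count 1 : ℤ) - ((v.take q).count 1 : ℤ) < 0 := by
      by_contra h'
      push_neg at h'
      have hlt : 0 < ∑ m ∈ Finset.range u.length,
          (((u.take m).count 1 : ℤ) - ((v.take m).count 1 : ℤ)) :=
        Finset.sum_pos' (fun i hi => h' i hi)
          ⟨m0, Finset.mem_range.mpr hm0lt, by omega⟩
      rw [hsum] at hlt
      exact lt_irrefl _ hlt
    obtain ⟨q, _, hqneg⟩ := hq
    have hqv : ((u.take q).count 1 : ℤ) - ((v.take q).count 1 : ℤ) = -1 := by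
      have := habs q; rw [abs_le] at this; omega
    rcases lt_trichotomy q m0 with hlt | heq | hgt
    · exact hcontra q m0 hlt (Or.inr ⟨hqv, hm0v⟩)
    · subst heq; omega
    · exact hcontra m0 q hgt (Or.inl ⟨hm0v, hqv⟩)
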